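/- If a real number C satisfies γ(a, |C/b|^{1/a}) = Sgn(C)·((k₂ − k₁)/(k₁ + k₂))·Γ(a), then ∫ L(z)·f(z) dz − ∫ L(z + C)·f(z) dz = ((k₁ + k₂)·b / (2·Γ(a)))·γ(2a, |C/b|^{1/a}). -/

import Mathlib

open Real MeasureTheory Filter

/-- The asymmetric loss function. -/
noncomputable def asymLoss (k₁ k₂ z : ℝ) : ℝ := if 0 ≤ z then k₁ * z else -k₂ * z

/-- The generalized Gaussian density with mean zero. -/
noncomputable def genGauss (a b z : ℝ) : ℝ :=
  (2 * a * b * Real.Gamma a)⁻¹ * Real.exp (-(|z / b| ^ (1 / a)))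

/-- The lower incomplete gamma function. -/
noncomputable def lowerGamma (p x : ℝ) : ℝ := ∫ t in (0:ℝ)..x, t ^ (p - 1) * Real.exp (-t)

/-- The upper incomplete gamma function. -/
noncomputable def upperGamma (p x : ℝ) : ℝ := ∫ t in Set.Ioi x, t ^ (p - 1) * Real.exp (-t)

/-- The sign function used in the paper: `1` for `c ≥ 0`, `-1` for `c < 0`. -/
noncomputable def Sgn (c : ℝ) : ℝ := if 0 ≤ c then 1 else -1

open Set

private lemma genGauss_neg (a b z : ℝ) : genGauss a b (-z) = genGauss a b z := by
  simp [genGauss, neg_div, abs_neg]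

private lemma asymLoss_neg (k₁ k₂ z : ℝ) : asymLoss k₁ k₂ (-z) = asymLoss k₂ k₁ z := by
  unfold asymLoss
  rcases lt_trichotomy z 0 with h | h | h
  · rw [if_pos (by linarith), if_neg (by linarith)]; ring
  · simp [h]
  · rw [if_neg (by linarith), if_pos (by linarith)]; ring

private lemma genGauss_nonneg {a b : ℝ} (ha : 0 < a) (hb : 0 < b) (z : ℝ) :
    0 ≤ genGauss a b z := by
  have := Real.Gamma_pos_of_pos ha
  unfold genGauss; positivity

private lemma asymLoss_abs_le {k₁ k₂ : ℝ} (hk₁ : 0 < k₁) (hk₂ : 0 < k₂) (z : ℝ) :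
    |asymLoss k₁ k₂ z| ≤ (k₁ + k₂) * |z| := by
  unfold asymLoss
  split_ifs with h
  · rw [abs_of_nonneg (by positivity), abs_of_nonneg h]; nlinarith
  · push_neg at h
    rw [abs_of_nonneg (by nlinarith), abs_of_neg h]; nlinarith

private lemma measurable_asymLoss (k₁ k₂ : ℝ) : Measurable (asymLoss k₁ k₂) := by
  unfold asymLoss
  exact Measurable.ite (measurableSet_le measurable_const measurable_id)
    (measurable_id.const_mul k₁) (measurable_id.const_mul (-k₂))

private lemma continuous_genGauss {a b : ℝ} (ha : 0 < a) (hb : 0 < b) :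
    Continuous (genGauss a b) := by
  unfold genGauss
  exact continuous_const.mul (((continuous_id.div_const b).abs.rpow_const
    (fun x => Or.inr (by positivity))).neg.rexp)

/- reflection helpers -/

private lemma integral_comp_neg_real (f : ℝ → ℝ) : ∫ x, f (-x) = ∫ x, f x := by
  have m : MeasurableEmbedding fun x : ℝ => -x := (Homeomorph.neg ℝ).measurableEmbedding
  conv_rhs => rw [← Measure.map_neg_eq_self (volume : Measure ℝ)]
  rw [m.integral_map]

private lemma integrableOn_Iic_of_neg {f : ℝ → ℝ} {c : ℝ}
    (h : IntegrableOn (fun x => f (-x)) (Ici (-c))) : IntegrableOn f (Iic c) := by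
  have m : MeasurableEmbedding fun x : ℝ => -x := (Homeomorph.neg ℝ).measurableEmbedding
  rw [IntegrableOn, ← Measure.map_neg_eq_self (volume : Measure ℝ), ← IntegrableOn,
    m.integrableOn_map_iff]
  simpa [Function.comp_def, neg_preimage] using h

/- substitution machinery -/

private lemma aux_subst_eq {a b : ℝ} (ha : 0 < a) (hb : 0 < b) (g h : ℝ → ℝ)
    (hgh : ∀ x ∈ Ioi (0:ℝ), a * x ^ (a - 1) * g (b * x ^ a) = h x) :
    ∫ z in Ioi (0:ℝ), g z = b * ∫ x in Ioi (0:ℝ), h x := by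
  have h2 : ∫ x in Ioi (0:ℝ), (|a| * x ^ (a - 1)) • g (b * x ^ a)
      = ∫ y in Ioi (0:ℝ), g (b * y) :=
    integral_comp_rpow_Ioi (fun y => g (b * y)) ha.ne'
  have h1 : ∫ x in Ioi (0:ℝ), g (b * x) = b⁻¹ • ∫ x in Ioi (b * 0), g x :=
    integral_comp_mul_left_Ioi g 0 hb
  have h3 : ∫ x in Ioi (0:ℝ), (|a| * x ^ (a - 1)) • g (b * x ^ a)
      = ∫ x in Ioi (0:ℝ), h x :=
    setIntegral_congr_fun measurableSet_Ioi fun x hx => by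
      rw [smul_eq_mul, abs_of_pos ha]; exact hgh x hx
  rw [h3] at h2
  rw [mul_zero] at h1
  rw [h2, h1, smul_eq_mul, mul_inv_cancel_left₀ hb.ne']

private lemma aux_subst_int {a b : ℝ} (ha : 0 < a) (hb : 0 < b) (g h : ℝ → ℝ)
    (hgh : ∀ x ∈ Ioi (0:ℝ), a * x ^ (a - 1) * g (b * x ^ a) = h x)
    (hh : IntegrableOn h (Ioi (0:ℝ))) : IntegrableOn g (Ioi (0:ℝ)) := by
  have h1 := integrableOn_Ioi_comp_mul_left_iff g 0 hb
  rw [mul_zero] at h1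
  rw [← h1, ← integrableOn_Ioi_comp_rpow_iff (fun y => g (b * y)) ha.ne']
  refine hh.congr_fun (fun x hx => ?_) measurableSet_Ioi
  rw [smul_eq_mul, abs_of_pos ha]
  exact (hgh x hx).symm

private lemma aux_mem_iff {a b : ℝ} (ha : 0 < a) (hb : 0 < b) {s : ℝ} (hs : 0 ≤ s)
    {x : ℝ} (hx : x ∈ Ioi (0:ℝ)) :
    b * x ^ a ∈ Ioc 0 s ↔ x ∈ Ioc 0 ((s / b) ^ (1 / a)) := by
  have hx : (0:ℝ) < x := hx
  have hxa : 0 < b * x ^ a := by positivity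
  simp only [Set.mem_Ioc, hxa, hx, true_and]
  rw [← le_div_iff₀' hb, one_div,
    le_rpow_inv_iff_of_pos hx.le (div_nonneg hs hb.le) ha]

private lemma aux_subst_eq_Ioc {a b : ℝ} (ha : 0 < a) (hb : 0 < b) (g h : ℝ → ℝ)
    (hgh : ∀ x ∈ Ioi (0:ℝ), a * x ^ (a - 1) * g (b * x ^ a) = h x)
    {s : ℝ} (hs : 0 ≤ s) :
    ∫ z in Ioc (0:ℝ) s, g z = b * ∫ x in Ioc (0:ℝ) ((s / b) ^ (1 / a)), h x := by
  have e1 : ∫ z in Ioc (0:ℝ) s, g z = ∫ z in Ioi (0:ℝ), (Ioc (0:ℝ) s).indicator g z := by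
    rw [setIntegral_indicator measurableSet_Ioc,
      Set.inter_eq_self_of_subset_right Ioc_subset_Ioi_self]
  have e2 : ∫ x in Ioc (0:ℝ) ((s / b) ^ (1 / a)), h x
      = ∫ x in Ioi (0:ℝ), (Ioc (0:ℝ) ((s / b) ^ (1 / a))).indicator h x := by
    rw [setIntegral_indicator measurableSet_Ioc,
      Set.inter_eq_self_of_subset_right Ioc_subset_Ioi_self]
  rw [e1, e2]
  refine aux_subst_eq ha hb _ _ (fun x hx => ?_)
  by_cases hmem : x ∈ Ioc (0:ℝ) ((s / b) ^ (1 / a))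
  · rw [Set.indicator_of_mem ((aux_mem_iff ha hb hs hx).mpr hmem),
      Set.indicator_of_mem hmem]
    exact hgh x hx
  · rw [Set.indicator_of_notMem (fun hc => hmem ((aux_mem_iff ha hb hs hx).mp hc)),
      Set.indicator_of_notMem hmem, mul_zero]

private lemma inner_eq {a b : ℝ} (ha : 0 < a) (hb : 0 < b) {x : ℝ} (hx : x ∈ Ioi (0:ℝ)) :
    |b * x ^ a / b| ^ (1 / a) = x := by
  have hx : (0:ℝ) < x := hx
  rw [mul_div_cancel_left₀ _ hb.ne', abs_of_pos (rpow_pos_of_pos hx a),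
    ← Real.rpow_mul hx.le, mul_one_div, div_self ha.ne', Real.rpow_one]

/- concrete integrals for N z = exp (-(|z/b|^(1/a))) -/

private lemma point0 {a b : ℝ} (ha : 0 < a) (hb : 0 < b) :
    ∀ x ∈ Ioi (0:ℝ), a * x ^ (a - 1) *
      (fun z => Real.exp (-(|z / b| ^ (1 / a)))) (b * x ^ a)
      = a * (Real.exp (-x) * x ^ (a - 1)) := fun x hx => by
  simp only
  rw [inner_eq ha hb hx]; ring

private lemma point1 {a b : ℝ} (ha : 0 < a) (hb : 0 < b) :
    ∀ x ∈ Ioi (0:ℝ), a * x ^ (a - 1) *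
      (fun z => z * Real.exp (-(|z / b| ^ (1 / a)))) (b * x ^ a)
      = (a * b) * (Real.exp (-x) * x ^ (2 * a - 1)) := fun x hx => by
  have hx' : (0:ℝ) < x := hx
  simp only
  rw [inner_eq ha hb hx, show 2 * a - 1 = (a - 1) + a by ring, Real.rpow_add hx']
  ring

private lemma N_integral_Ioi {a b : ℝ} (ha : 0 < a) (hb : 0 < b) :
    ∫ z in Ioi (0:ℝ), Real.exp (-(|z / b| ^ (1 / a))) = a * b * Real.Gamma a := by
  rw [aux_subst_eq ha hb _ _ (point0 ha hb), integral_const_mul,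
    ← Real.Gamma_eq_integral ha]
  ring

private lemma N_integrableOn_Ioi {a b : ℝ} (ha : 0 < a) (hb : 0 < b) :
    IntegrableOn (fun z => Real.exp (-(|z / b| ^ (1 / a)))) (Ioi (0:ℝ)) :=
  aux_subst_int ha hb _ _ (point0 ha hb)
    ((Real.GammaIntegral_convergent ha).const_mul a)

private lemma N1_integrableOn_Ioi {a b : ℝ} (ha : 0 < a) (hb : 0 < b) :
    IntegrableOn (fun z => z * Real.exp (-(|z / b| ^ (1 / a)))) (Ioi (0:ℝ)) :=
  aux_subst_int ha hb _ _ (point1 ha hb)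
    ((Real.GammaIntegral_convergent (by linarith)).const_mul (a * b))

private lemma N_integral_Ioc {a b : ℝ} (ha : 0 < a) (hb : 0 < b) {s : ℝ} (hs : 0 ≤ s) :
    ∫ z in Ioc (0:ℝ) s, Real.exp (-(|z / b| ^ (1 / a)))
      = a * b * lowerGamma a ((s / b) ^ (1 / a)) := by
  rw [aux_subst_eq_Ioc ha hb _ _ (point0 ha hb) hs, integral_const_mul, lowerGamma,
    intervalIntegral.integral_of_le (Real.rpow_nonneg (div_nonneg hs hb.le) _)]
  rw [show (∫ t in Ioc (0:ℝ) ((s / b) ^ (1 / a)), t ^ (a - 1) * Real.exp (-t))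
    = ∫ t in Ioc (0:ℝ) ((s / b) ^ (1 / a)), Real.exp (-t) * t ^ (a - 1) from
    setIntegral_congr_fun measurableSet_Ioc fun t _ => mul_comm _ _]
  ring

private lemma N1_integral_Ioc {a b : ℝ} (ha : 0 < a) (hb : 0 < b) {s : ℝ} (hs : 0 ≤ s) :
    ∫ z in Ioc (0:ℝ) s, z * Real.exp (-(|z / b| ^ (1 / a)))
      = a * (b * b) * lowerGamma (2 * a) ((s / b) ^ (1 / a)) := by
  rw [aux_subst_eq_Ioc ha hb _ _ (point1 ha hb) hs, integral_const_mul, lowerGamma,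
    intervalIntegral.integral_of_le (Real.rpow_nonneg (div_nonneg hs hb.le) _)]
  rw [show (∫ t in Ioc (0:ℝ) ((s / b) ^ (1 / a)), t ^ (2 * a - 1) * Real.exp (-t))
    = ∫ t in Ioc (0:ℝ) ((s / b) ^ (1 / a)), Real.exp (-t) * t ^ (2 * a - 1) from
    setIntegral_congr_fun measurableSet_Ioc fun t _ => mul_comm _ _]
  ring

/- global integrability of the density and its moments -/

private lemma genGauss_integrableOn_Ioi' {a b : ℝ} (ha : 0 < a) (hb : 0 < b) :
    IntegrableOn (genGauss a b) (Ioi (0:ℝ)) := by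
  have := (N_integrableOn_Ioi ha hb).const_mul (2 * a * b * Real.Gamma a)⁻¹
  exact IntegrableOn.congr_fun this (fun z _ => rfl) measurableSet_Ioi

private lemma zgen_integrableOn_Ioi {a b : ℝ} (ha : 0 < a) (hb : 0 < b) :
    IntegrableOn (fun z => z * genGauss a b z) (Ioi (0:ℝ)) := by
  have := (N1_integrableOn_Ioi ha hb).const_mul (2 * a * b * Real.Gamma a)⁻¹
  exact IntegrableOn.congr_fun this
    (fun z _ => by simp only [genGauss]; ring) measurableSet_Ioi

private lemma gen_integrable {a b : ℝ} (ha : 0 < a) (hb : 0 < b) :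
    Integrable (genGauss a b) := by
  have h1 : IntegrableOn (genGauss a b) (Ioi (0:ℝ)) := genGauss_integrableOn_Ioi' ha hb
  have h2 : IntegrableOn (genGauss a b) (Iic (0:ℝ)) := by
    refine integrableOn_Iic_of_neg ?_
    rw [neg_zero]
    exact ((integrableOn_Ici_iff_integrableOn_Ioi (f := genGauss a b) (b := 0)).mpr h1).congr_fun
      (fun x _ => (genGauss_neg a b x).symm) measurableSet_Ici
  rw [← integrableOn_univ, ← Set.Iic_union_Ioi (a := (0:ℝ))]
  exact h2.union h1

private lemma zgen_integrable {a b : ℝ} (ha : 0 < a) (hb : 0 < b) :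
    Integrable (fun z => z * genGauss a b z) := by
  have h1 := zgen_integrableOn_Ioi ha hb
  have h2 : IntegrableOn (fun z => z * genGauss a b z) (Iic (0:ℝ)) := by
    refine integrableOn_Iic_of_neg ?_
    rw [neg_zero]
    have h3 : IntegrableOn (fun x : ℝ => -(x * genGauss a b x)) (Ici (0:ℝ)) :=
      ((integrableOn_Ici_iff_integrableOn_Ioi (f := fun z => z * genGauss a b z) (b := 0)).mpr h1).neg
    exact IntegrableOn.congr_fun h3
      (fun x _ => by rw [genGauss_neg]; ring) measurableSet_Ici
  rw [← integrableOn_univ, ← Set.Iic_union_Ioi (a := (0:ℝ))]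
  exact h2.union h1

private lemma absgen_integrable {a b : ℝ} (ha : 0 < a) (hb : 0 < b) :
    Integrable (fun z => |z| * genGauss a b z) := by
  refine (zgen_integrable ha hb).abs.congr (Filter.Eventually.of_forall fun z => ?_)
  simp only [abs_mul]
  rw [abs_of_nonneg (genGauss_nonneg ha hb z)]

/- the main computation for C ≥ 0 -/

private lemma main_nonneg (a b k₁ k₂ : ℝ) (ha : 0 < a) (hb : 0 < b)
    (hk₁ : 0 < k₁) (hk₂ : 0 < k₂) (C : ℝ) (hC0 : 0 ≤ C)
    (hC : lowerGamma a ((C / b) ^ (1 / a)) = ((k₂ - k₁) / (k₁ + k₂)) * Real.Gamma a) :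
    (∫ z, asymLoss k₁ k₂ z * genGauss a b z)
      - (∫ z, asymLoss k₁ k₂ (z + C) * genGauss a b z) =
      (k₁ + k₂) * b / (2 * Real.Gamma a) * lowerGamma (2 * a) ((C / b) ^ (1 / a)) := by
  have hΓ : 0 < Real.Gamma a := Real.Gamma_pos_of_pos ha
  set u : ℝ := (C / b) ^ (1 / a) with hu
  set γ₂ : ℝ := lowerGamma (2 * a) u with hγ₂
  have Igen := gen_integrable ha hb
  have Izgen := zgen_integrable ha hb
  have Iabsgen := absgen_integrable ha hb
  have genm : AEStronglyMeasurable (genGauss a b) volume :=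
    (continuous_genGauss ha hb).aestronglyMeasurable
  -- values of the basic integrals
  have hPinf : ∫ z in Ioi (0:ℝ), genGauss a b z = 1 / 2 := by
    unfold genGauss
    rw [integral_const_mul, N_integral_Ioi ha hb]
    field_simp
  have hPC : ∫ z in Ioc (0:ℝ) C, genGauss a b z
      = lowerGamma a u / (2 * Real.Gamma a) := by
    unfold genGauss
    rw [integral_const_mul, N_integral_Ioc ha hb hC0, ← hu]
    field_simp
  have hQC : ∫ z in Ioc (0:ℝ) C, z * genGauss a b z
      = b * γ₂ / (2 * Real.Gamma a) := by
    rw [show (∫ z in Ioc (0:ℝ) C, z * genGauss a b z)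
        = ∫ z in Ioc (0:ℝ) C, (2 * a * b * Real.Gamma a)⁻¹ *
          (z * Real.exp (-(|z / b| ^ (1 / a)))) from
      setIntegral_congr_fun measurableSet_Ioc fun z _ => by simp only [genGauss]; ring]
    rw [integral_const_mul, N1_integral_Ioc ha hb hC0, ← hu, hγ₂]
    field_simp
  set Qinf : ℝ := ∫ z in Ioi (0:ℝ), z * genGauss a b z with hQinf
  set pC : ℝ := ∫ z in Ioi C, genGauss a b z with hpCdef
  set qC : ℝ := ∫ z in Ioi C, z * genGauss a b z with hqCdef
  have hsplitQ : Qinf = (∫ z in Ioc (0:ℝ) C, z * genGauss a b z) + qC := by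
    rw [hQinf, hqCdef, ← Ioc_union_Ioi_eq_Ioi hC0]
    exact setIntegral_union (Ioc_disjoint_Ioi le_rfl) measurableSet_Ioi
      Izgen.integrableOn Izgen.integrableOn
  have hsplitP : (1:ℝ)/2 = (∫ z in Ioc (0:ℝ) C, genGauss a b z) + pC := by
    rw [← hPinf, hpCdef, ← Ioc_union_Ioi_eq_Ioi hC0]
    exact setIntegral_union (Ioc_disjoint_Ioi le_rfl) measurableSet_Ioi
      Igen.integrableOn Igen.integrableOn
  -- E₁
  have hmul1 : Integrable (fun z => asymLoss k₁ k₂ z * genGauss a b z) := by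
    refine (Iabsgen.const_mul (k₁ + k₂)).mono'
      ((measurable_asymLoss k₁ k₂).aestronglyMeasurable.mul genm)
      (Filter.Eventually.of_forall fun z => ?_)
    rw [Real.norm_eq_abs, abs_mul, abs_of_nonneg (genGauss_nonneg ha hb z)]
    calc |asymLoss k₁ k₂ z| * genGauss a b z
        ≤ ((k₁ + k₂) * |z|) * genGauss a b z :=
          mul_le_mul_of_nonneg_right (asymLoss_abs_le hk₁ hk₂ z) (genGauss_nonneg ha hb z)
      _ = (k₁ + k₂) * (|z| * genGauss a b z) := by ring
  have hIoi1 : ∫ z in Ioi (0:ℝ), asymLoss k₁ k₂ z * genGauss a b z = k₁ * Qinf := by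
    rw [show (∫ z in Ioi (0:ℝ), asymLoss k₁ k₂ z * genGauss a b z)
        = ∫ z in Ioi (0:ℝ), k₁ * (z * genGauss a b z) from
      setIntegral_congr_fun measurableSet_Ioi fun z hz => by
        unfold asymLoss; rw [if_pos (le_of_lt hz)]; ring]
    rw [integral_const_mul, hQinf]
  have hIic1 : ∫ z in Iic (0:ℝ), asymLoss k₁ k₂ z * genGauss a b z = k₂ * Qinf := by
    have r := integral_comp_neg_Iic (0:ℝ) (fun y => asymLoss k₁ k₂ (-y) * genGauss a b (-y))
    simp only [neg_neg, neg_zero] at r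
    rw [r]
    rw [show (∫ x in Ioi (0:ℝ), asymLoss k₁ k₂ (-x) * genGauss a b (-x))
        = ∫ x in Ioi (0:ℝ), k₂ * (x * genGauss a b x) from
      setIntegral_congr_fun measurableSet_Ioi fun x hx => by
        rw [asymLoss_neg, genGauss_neg]
        unfold asymLoss; rw [if_pos (le_of_lt hx)]; ring]
    rw [integral_const_mul, hQinf]
  have hE1 : ∫ z, asymLoss k₁ k₂ z * genGauss a b z = k₁ * Qinf + k₂ * Qinf := by
    rw [← intervalIntegral.integral_Iic_add_Ioi (b := (0:ℝ))
      hmul1.integrableOn hmul1.integrableOn, hIic1, hIoi1]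
    ring
  -- E₂ integrability
  have hmul2 : Integrable (fun z => asymLoss k₁ k₂ (z + C) * genGauss a b z) := by
    refine ((Iabsgen.const_mul (k₁ + k₂)).add (Igen.const_mul ((k₁ + k₂) * C))).mono'
      (((measurable_asymLoss k₁ k₂).comp (measurable_id.add_const C)).aestronglyMeasurable.mul genm)
      (Filter.Eventually.of_forall fun z => ?_)
    rw [Real.norm_eq_abs, abs_mul, abs_of_nonneg (genGauss_nonneg ha hb z)]
    have h1 : |asymLoss k₁ k₂ (z + C)| ≤ (k₁ + k₂) * (|z| + C) := by
      calc |asymLoss k₁ k₂ (z + C)| ≤ (k₁ + k₂) * |z + C| := asymLoss_abs_le hk₁ hk₂ _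
        _ ≤ (k₁ + k₂) * (|z| + C) := by
            have h2 := abs_add_le z C
            rw [abs_of_nonneg hC0] at h2
            nlinarith
    refine le_trans (mul_le_mul_of_nonneg_right h1 (genGauss_nonneg ha hb z)) ?_
    simp only [Pi.add_apply]
    exact le_of_eq (by ring)
  have hgensum : ∫ z, genGauss a b z = 1 := by
    rw [← intervalIntegral.integral_Iic_add_Ioi (b := (0:ℝ))
      Igen.integrableOn Igen.integrableOn, hPinf]
    have r := integral_comp_neg_Iic (0:ℝ) (fun y => genGauss a b (-y))
    simp only [neg_neg, neg_zero] at r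
    rw [r, show (∫ x in Ioi (0:ℝ), genGauss a b (-x)) = ∫ x in Ioi (0:ℝ), genGauss a b x from
      setIntegral_congr_fun measurableSet_Ioi fun x _ => by rw [genGauss_neg], hPinf]
    norm_num
  have hodd : ∫ z, z * genGauss a b z = 0 := by
    have h := integral_comp_neg_real (fun z => z * genGauss a b z)
    simp only [genGauss_neg] at h
    have h2 : ∫ (x : ℝ), -x * genGauss a b x = - ∫ (x : ℝ), x * genGauss a b x := by
      simp_rw [neg_mul]
      exact integral_neg _
    linarith [h, h2]
  have hF3 : Integrable (fun z => (z + C) * genGauss a b z) := by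
    refine (Izgen.add (Igen.const_mul C)).congr (Filter.Eventually.of_forall fun z => ?_)
    simp only [Pi.add_apply]
    ring
  have hallF3 : ∫ z, (z + C) * genGauss a b z = C := by
    rw [show (∫ z, (z + C) * genGauss a b z)
        = ∫ z, (z * genGauss a b z + C * genGauss a b z) from by
      congr 1; funext z; ring]
    rw [integral_add Izgen (Igen.const_mul C), hodd, integral_const_mul, hgensum]
    ring
  -- left tail of E₂
  have hIicF2 : ∫ z in Iic (-C), asymLoss k₁ k₂ (z + C) * genGauss a b z
      = k₂ * (qC - C * pC) := by
    have r := integral_comp_neg_Iic (-C) (fun y => asymLoss k₁ k₂ (-y + C) * genGauss a b (-y))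
    simp only [neg_neg] at r
    rw [r]
    rw [show (∫ x in Ioi C, asymLoss k₁ k₂ (-x + C) * genGauss a b (-x))
        = ∫ x in Ioi C, (k₂ * (x * genGauss a b x) - (k₂ * C) * genGauss a b x) from
      setIntegral_congr_fun measurableSet_Ioi fun x hx => by
        have hx' : C < x := hx
        rw [show -x + C = -(x - C) by ring, asymLoss_neg, genGauss_neg]
        unfold asymLoss
        rw [if_pos (by linarith : (0:ℝ) ≤ x - C)]
        ring]
    rw [integral_sub (Izgen.const_mul k₂).integrableOn (Igen.const_mul (k₂ * C)).integrableOn,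
      integral_const_mul, integral_const_mul, ← hpCdef, ← hqCdef]
    ring
  -- the Iic (-C) part of (z+C) * gen
  have hIicF3 : ∫ z in Iic (-C), (z + C) * genGauss a b z = C * pC - qC := by
    have r := integral_comp_neg_Iic (-C) (fun y => (-y + C) * genGauss a b (-y))
    simp only [neg_neg] at r
    rw [r]
    rw [show (∫ x in Ioi C, (-x + C) * genGauss a b (-x))
        = ∫ x in Ioi C, ((C * genGauss a b x) - x * genGauss a b x) from
      setIntegral_congr_fun measurableSet_Ioi fun x _ => by
        rw [genGauss_neg]; ring]
    rw [integral_sub (Igen.const_mul C).integrableOn Izgen.integrableOn,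
      integral_const_mul, ← hpCdef, ← hqCdef]
  have hIoiF2 : ∫ z in Ioi (-C), asymLoss k₁ k₂ (z + C) * genGauss a b z
      = k₁ * (C - (C * pC - qC)) := by
    rw [show (∫ z in Ioi (-C), asymLoss k₁ k₂ (z + C) * genGauss a b z)
        = ∫ z in Ioi (-C), k₁ * ((z + C) * genGauss a b z) from
      setIntegral_congr_fun measurableSet_Ioi fun z hz => by
        have hz' : -C < z := hz
        unfold asymLoss
        rw [if_pos (by linarith : (0:ℝ) ≤ z + C)]
        ring]
    rw [integral_const_mul]
    have hsp := intervalIntegral.integral_Iic_add_Ioi (b := (-C))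
      hF3.integrableOn hF3.integrableOn
    rw [hallF3] at hsp
    rw [show (∫ z in Ioi (-C), (z + C) * genGauss a b z)
        = C - (C * pC - qC) from by rw [← hIicF3]; linarith]
  have hE2 : ∫ z, asymLoss k₁ k₂ (z + C) * genGauss a b z
      = k₂ * (qC - C * pC) + k₁ * (C - (C * pC - qC)) := by
    rw [← intervalIntegral.integral_Iic_add_Ioi (b := (-C))
      hmul2.integrableOn hmul2.integrableOn, hIicF2, hIoiF2]
  -- assemble
  have hqC : qC = Qinf - b * γ₂ / (2 * Real.Gamma a) := by
    rw [hQC] at hsplitQ; linarith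
  have hpC : pC = 1 / 2 - ((k₂ - k₁) / (k₁ + k₂)) * Real.Gamma a / (2 * Real.Gamma a) := by
    rw [hPC, hC] at hsplitP
    linarith
  rw [hE1, hE2, hqC, hpC]
  have hk : k₁ + k₂ ≠ 0 := by positivity
  field_simp
  ring

theorem expected_loss_reduction (a b k₁ k₂ : ℝ) (ha : 0 < a) (hb : 0 < b)
    (hk₁ : 0 < k₁) (hk₂ : 0 < k₂) (C : ℝ)
    (hC : lowerGamma a (|C / b| ^ (1 / a)) = Sgn C * ((k₂ - k₁) / (k₁ + k₂)) * Real.Gamma a) :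
    (∫ z, asymLoss k₁ k₂ z * genGauss a b z)
      - (∫ z, asymLoss k₁ k₂ (z + C) * genGauss a b z) =
      (k₁ + k₂) * b / (2 * Real.Gamma a) * lowerGamma (2 * a) (|C / b| ^ (1 / a)) := by
  rcases le_or_gt 0 C with h | h
  · have habs : |C / b| = C / b := abs_of_nonneg (div_nonneg h hb.le)
    rw [habs] at hC ⊢
    unfold Sgn at hC
    rw [if_pos h, one_mul] at hC
    exact main_nonneg a b k₁ k₂ ha hb hk₁ hk₂ C h hC
  · have habs : |C / b| = -C / b := by
      rw [abs_of_neg (div_neg_of_neg_of_pos h hb), neg_div]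
    rw [habs] at hC ⊢
    unfold Sgn at hC
    rw [if_neg (not_le.mpr h)] at hC
    have hC' : lowerGamma a ((-C / b) ^ (1 / a)) = ((k₁ - k₂) / (k₂ + k₁)) * Real.Gamma a := by
      rw [hC]; ring
    have key := main_nonneg a b k₂ k₁ ha hb hk₂ hk₁ (-C) (by linarith) hC'
    have e1 : ∫ z, asymLoss k₂ k₁ z * genGauss a b z
        = ∫ z, asymLoss k₁ k₂ z * genGauss a b z := by
      rw [← integral_comp_neg_real (fun z => asymLoss k₁ k₂ z * genGauss a b z)]
      congr 1; funext z
      rw [asymLoss_neg, genGauss_neg]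
    have e2 : ∫ z, asymLoss k₂ k₁ (z + -C) * genGauss a b z
        = ∫ z, asymLoss k₁ k₂ (z + C) * genGauss a b z := by
      rw [← integral_comp_neg_real (fun z => asymLoss k₁ k₂ (z + C) * genGauss a b z)]
      congr 1; funext z
      rw [genGauss_neg, show -z + C = -(z + -C) by ring, asymLoss_neg]
    rw [e1, e2] at key
    rw [key]
    ring
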